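/- For $p\geq 2$ an integer, the $(p-1)\times(p-1)$ matrix with entries $M_{a,b} = \frac{\sin(\pi a b/p)}{\sin(\pi a/p)}$ for $1\leq a,b\leq p-1$ is invertible. -/

import Mathlib

open Real Polynomial Polynomial.Chebyshev

lemma U_deg_lead : ∀ n : ℕ, ((U ℝ n).natDegree = n ∧ (U ℝ n).leadingCoeff = 2 ^ n)
  | 0 => by simp [U_zero]
  | 1 => by
      rw [show ((1:ℕ):ℤ) = 1 by norm_num, U_one]
      constructor
      · simpa using natDegree_mul (p := (2:ℝ[X])) (q := X) (by norm_num) X_ne_zero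
      · rw [leadingCoeff_mul, leadingCoeff_X, (map_ofNat Polynomial.C 2).symm, leadingCoeff_C]
        ring
  | (n + 2) => by
      obtain ⟨h1d, h1l⟩ := U_deg_lead (n + 1)
      obtain ⟨h0d, h0l⟩ := U_deg_lead n
      have hc1 : ((n + 1 : ℕ) : ℤ) = (n : ℤ) + 1 := by push_cast; ring
      have hc2 : ((n + 2 : ℕ) : ℤ) = (n : ℤ) + 2 := by push_cast; ring
      rw [hc1] at h1d h1l
      have hU1ne : U ℝ ((n : ℤ) + 1) ≠ 0 := by
        intro h; rw [h, leadingCoeff_zero] at h1l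
        exact (pow_ne_zero _ (two_ne_zero)) h1l.symm
      have hUne : U ℝ (n : ℤ) ≠ 0 := by
        intro h; rw [h, leadingCoeff_zero] at h0l
        exact (pow_ne_zero _ (two_ne_zero)) h0l.symm
      have h2Xne : (2 : ℝ[X]) * X ≠ 0 := by
        intro h
        have := congrArg (fun q => q.coeff 1) h
        simp at this
      have hAd : ((2 : ℝ[X]) * X * U ℝ ((n:ℤ) + 1)).natDegree = n + 2 := by
        rw [natDegree_mul h2Xne hU1ne, h1d]
        have : ((2 : ℝ[X]) * X).natDegree = 1 := by
          simpa using natDegree_mul (p := (2:ℝ[X])) (q := X) (by norm_num) X_ne_zero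
        omega
      have hAl : ((2 : ℝ[X]) * X * U ℝ ((n:ℤ) + 1)).leadingCoeff = 2 ^ (n + 2) := by
        rw [leadingCoeff_mul, leadingCoeff_mul, h1l, leadingCoeff_X,
          (map_ofNat Polynomial.C 2).symm, leadingCoeff_C]
        ring
      have hdlt : (U ℝ (n : ℤ)).degree < ((2 : ℝ[X]) * X * U ℝ ((n:ℤ) + 1)).degree := by
        rw [degree_eq_natDegree hUne, degree_eq_natDegree (by
          intro h; rw [h, natDegree_zero] at hAd; omega), hAd, h0d]
        exact_mod_cast by omega
      have hrec := U_add_two ℝ n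
      rw [hc2, hrec]
      refine ⟨?_, ?_⟩
      · rw [natDegree_sub_eq_left_of_natDegree_lt (by rw [h0d, hAd]; omega), hAd]
      · rw [leadingCoeff_sub_of_degree_lt hdlt, hAl]

/-- The `(p-1) × (p-1)` matrix with entries `sin(π a b / p) / sin(π a / p)` is invertible. -/
theorem stmt_1 (p : ℕ) (hp : 2 ≤ p) :
    IsUnit (Matrix.of fun a b : Fin (p - 1) =>
      Real.sin (Real.pi * ((a : ℕ) + 1) * ((b : ℕ) + 1) / p) /
        Real.sin (Real.pi * ((a : ℕ) + 1) / p)) := by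
  have hp0 : (0 : ℝ) < p := by positivity
  set x : Fin (p - 1) → ℝ := fun a => Real.cos (Real.pi * ((a : ℕ) + 1) / p) with hx
  have hθ : ∀ a : Fin (p - 1), Real.pi * ((a : ℕ) + 1) / p ∈ Set.Ioo 0 Real.pi := by
    intro a
    constructor
    · positivity
    · rw [div_lt_iff₀ hp0]
      have ha : (a : ℕ) + 1 < p := by omega
      have : ((a : ℕ) + 1 : ℝ) < p := by exact_mod_cast ha
      nlinarith [Real.pi_pos]
  have hsin : ∀ a : Fin (p - 1), Real.sin (Real.pi * ((a : ℕ) + 1) / p) ≠ 0 := fun a =>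
    ne_of_gt (Real.sin_pos_of_pos_of_lt_pi (hθ a).1 (hθ a).2)
  have hM : (Matrix.of fun a b : Fin (p - 1) =>
      Real.sin (Real.pi * ((a : ℕ) + 1) * ((b : ℕ) + 1) / p) /
        Real.sin (Real.pi * ((a : ℕ) + 1) / p)) =
      Matrix.of (fun a b : Fin (p - 1) => (U ℝ ((b : ℕ) : ℤ)).eval (x a)) := by
    ext a b
    have h := U_real_cos (Real.pi * ((a : ℕ) + 1) / p) ((b : ℕ) : ℤ)
    simp only [Matrix.of_apply, hx]
    rw [div_eq_iff (hsin a), h]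
    congr 1
    push_cast
    field_simp
  rw [hM]
  have hinj : Function.Injective x := by
    intro a a' h
    have := Real.injOn_cos ⟨le_of_lt (hθ a).1, le_of_lt (hθ a).2⟩
      ⟨le_of_lt (hθ a').1, le_of_lt (hθ a').2⟩ h
    have hp' : (p:ℝ) ≠ 0 := ne_of_gt hp0
    have h3 := congrArg (fun t => t * p / Real.pi) this
    simp only [mul_comm] at h3
    field_simp at h3
    exact Fin.ext (by exact_mod_cast (add_right_cancel h3))
  set q : Fin (p - 1) → ℝ[X] := fun j => C (((2 : ℝ) ^ (j : ℕ))⁻¹) * U ℝ ((j : ℕ) : ℤ) with hq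
  have hdeg : ∀ j : Fin (p - 1), (q j).natDegree = (j : ℕ) := by
    intro j
    rw [hq]
    rw [natDegree_C_mul (by positivity)]
    exact (U_deg_lead (j : ℕ)).1
  have hmonic : ∀ j : Fin (p - 1), (q j).Monic := by
    intro j
    unfold q
    rw [Monic, leadingCoeff_mul, leadingCoeff_C, (U_deg_lead (j : ℕ)).2]
    simp
  have hvd := Matrix.det_eval_matrixOfPolynomials_eq_det_vandermonde x q hdeg hmonic
  have hvne : (Matrix.vandermonde x).det ≠ 0 := Matrix.det_vandermonde_ne_zero_iff.mpr hinj
  have hsplit : (Matrix.of fun i j => (q j).eval (x i)) =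
      (Matrix.of (fun a b : Fin (p - 1) => (U ℝ ((b : ℕ) : ℤ)).eval (x a))) *
        Matrix.diagonal (fun j : Fin (p - 1) => ((2 : ℝ) ^ (j : ℕ))⁻¹) := by
    ext i j
    rw [Matrix.mul_diagonal]
    simp [hq, mul_comm]
  rw [hsplit, Matrix.det_mul, Matrix.det_diagonal] at hvd
  have hprod : (∏ j : Fin (p - 1), ((2 : ℝ) ^ (j : ℕ))⁻¹) ≠ 0 := by
    apply Finset.prod_ne_zero_iff.mpr
    intro j _
    positivity
  rw [Matrix.isUnit_iff_isUnit_det, isUnit_iff_ne_zero]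
  intro h0
  rw [h0, zero_mul] at hvd
  exact hvne hvd
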